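/- Let W₁, ..., W_m be finite groups, V_i a finite-dimensional Q-representation of W_i, V = V₁ ⊕ ... ⊕ V_m with the product action of W = W₁ × ... × W_m. Let L ⊂ V be a W-invariant finitely generated free abelian subgroup. If L is a quasi-permutation W-lattice, then for each i the lattice L_i := L ∩ V_i is a quasi-permutation W_i-lattice. -/

import Mathlib

/-! Basic definitions: Γ-lattices, permutation / quasi-permutation / invertible /
quasi-invertible lattices, group cohomology via inhomogeneous cochains,
Tate–Shafarevich groups, and the lattice `J_Γ = ℤ[Γ]/ℤ`. -/

/-- A bundled additive module with an action of the group `Γ`. -/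
structure GammaMod (Γ : Type) [Group Γ] : Type 1 where
  carrier : Type
  [acg : AddCommGroup carrier]
  [act : DistribMulAction Γ carrier]

attribute [instance] GammaMod.acg GammaMod.act

section Lattices

variable {Γ : Type} [Group Γ]

/-- A permutation `Γ`-lattice: it admits a finite `ℤ`-basis permuted by `Γ`. -/
def IsPermutation (P : GammaMod Γ) : Prop :=
  ∃ (ι : Type) (_ : Fintype ι) (b : Module.Basis ι ℤ P.carrier),
    ∀ (γ : Γ) (i : ι), ∃ j, γ • (b i) = b j

/-- A `Γ`-equivariant additive map. -/
def IsEquivariant {A B : GammaMod Γ} (f : A.carrier →+ B.carrier) : Prop :=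
  ∀ (γ : Γ) (x : A.carrier), f (γ • x) = γ • f x

/-- `0 → A → B → C → 0` is short exact. -/
def IsShortExact {A B C : GammaMod Γ} (f : A.carrier →+ B.carrier)
    (g : B.carrier →+ C.carrier) : Prop :=
  Function.Injective f ∧ Function.Surjective g ∧ ∀ y, g y = 0 ↔ y ∈ Set.range f

/-- A quasi-permutation `Γ`-lattice: it fits into a short exact sequence
`0 → L → P → P' → 0` with `P`, `P'` permutation lattices. -/
def IsQuasiPermutation (L : GammaMod Γ) : Prop :=
  ∃ (P P' : GammaMod Γ), IsPermutation P ∧ IsPermutation P' ∧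
    ∃ (f : L.carrier →+ P.carrier) (g : P.carrier →+ P'.carrier),
      IsEquivariant f ∧ IsEquivariant g ∧ IsShortExact f g

/-- `A` is a direct summand of `B` (equivariantly). -/
def IsDirectSummandOf (A B : GammaMod Γ) : Prop :=
  ∃ (i : A.carrier →+ B.carrier) (r : B.carrier →+ A.carrier),
    IsEquivariant i ∧ IsEquivariant r ∧ r.comp i = AddMonoidHom.id _

/-- An invertible `Γ`-lattice: a direct summand of a permutation lattice. -/
def IsInvertibleLat (I : GammaMod Γ) : Prop :=
  ∃ P : GammaMod Γ, IsPermutation P ∧ IsDirectSummandOf I P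

/-- A quasi-invertible `Γ`-lattice: a direct summand of a quasi-permutation lattice. -/
def IsQuasiInvertible (L : GammaMod Γ) : Prop :=
  ∃ Q : GammaMod Γ, IsQuasiPermutation Q ∧ IsDirectSummandOf L Q

end Lattices

/-- The action of `G` on an invariant additive subgroup. -/
def subAction {G M : Type} [Group G] [AddCommGroup M] [DistribMulAction G M]
    (S : AddSubgroup M) (h : ∀ (g : G) (x : M), x ∈ S → g • x ∈ S) :
    DistribMulAction G S where
  smul g x := ⟨g • (x : M), h g x x.2⟩
  one_smul x := Subtype.ext (one_smul G (x : M))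
  mul_smul g g' x := Subtype.ext (mul_smul g g' (x : M))
  smul_zero g := Subtype.ext (smul_zero g)
  smul_add g x y := Subtype.ext (smul_add g (x : M) (y : M))

section Cohomology

variable (G : Type) [Group G] (M : Type) [AddCommGroup M] [DistribMulAction G M]

/-- Inhomogeneous 2-cocycle condition. -/
def IsCocycle2 (f : G → G → M) : Prop :=
  ∀ g h k : G, g • f h k + f g (h * k) = f (g * h) k + f g h

/-- Inhomogeneous 2-coboundary condition. -/
def IsCoboundary2 (f : G → G → M) : Prop :=
  ∃ φ : G → M, ∀ g h : G, f g h = g • φ h + φ g - φ (g * h)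

/-- Inhomogeneous 3-cocycle condition. -/
def IsCocycle3 (f : G → G → G → M) : Prop :=
  ∀ g h k l : G,
    g • f h k l + f g (h * k) l + f g h k = f (g * h) k l + f g h (k * l)

/-- Inhomogeneous 3-coboundary condition. -/
def IsCoboundary3 (f : G → G → G → M) : Prop :=
  ∃ φ : G → G → M, ∀ g h k : G,
    f g h k = g • φ h k - φ (g * h) k + φ g (h * k) - φ g h

/-- The subgroup of 2-cocycles. -/
def cocycles2 : AddSubgroup (G → G → M) where
  carrier := {f | IsCocycle2 G M f}
  add_mem' := by
    intro f g hf hg a b c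
    have := congrArg₂ (· + ·) (hf a b c) (hg a b c)
    simp only [Pi.add_apply, smul_add]
    abel_nf at this ⊢
    exact this
  zero_mem' := by intro a b c; simp
  neg_mem' := by
    intro f hf a b c
    have := congrArg Neg.neg (hf a b c)
    simp only [Pi.neg_apply, smul_neg]
    abel_nf at this ⊢
    exact this

/-- The subgroup of 2-coboundaries. -/
def coboundaries2 : AddSubgroup (G → G → M) where
  carrier := {f | IsCoboundary2 G M f}
  add_mem' := by
    rintro f g ⟨φ, hφ⟩ ⟨ψ, hψ⟩
    refine ⟨φ + ψ, fun a b => ?_⟩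
    simp only [Pi.add_apply, smul_add, hφ a b, hψ a b]
    abel
  zero_mem' := ⟨0, by intro a b; simp⟩
  neg_mem' := by
    rintro f ⟨φ, hφ⟩
    refine ⟨-φ, fun a b => ?_⟩
    simp only [Pi.neg_apply, smul_neg, hφ a b]
    abel

/-- The subgroup of 3-cocycles. -/
def cocycles3 : AddSubgroup (G → G → G → M) where
  carrier := {f | IsCocycle3 G M f}
  add_mem' := by
    intro f g hf hg a b c d
    have := congrArg₂ (· + ·) (hf a b c d) (hg a b c d)
    simp only [Pi.add_apply, smul_add]
    abel_nf at this ⊢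
    exact this
  zero_mem' := by intro a b c d; simp
  neg_mem' := by
    intro f hf a b c d
    have := congrArg Neg.neg (hf a b c d)
    simp only [Pi.neg_apply, smul_neg]
    abel_nf at this ⊢
    exact this

/-- The subgroup of 3-coboundaries. -/
def coboundaries3 : AddSubgroup (G → G → G → M) where
  carrier := {f | IsCoboundary3 G M f}
  add_mem' := by
    rintro f g ⟨φ, hφ⟩ ⟨ψ, hψ⟩
    refine ⟨φ + ψ, fun a b c => ?_⟩
    simp only [Pi.add_apply, smul_add, hφ a b c, hψ a b c]
    abel
  zero_mem' := ⟨0, by intro a b c; simp⟩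
  neg_mem' := by
    rintro f ⟨φ, hφ⟩
    refine ⟨-φ, fun a b c => ?_⟩
    simp only [Pi.neg_apply, smul_neg, hφ a b c]
    abel

/-- Third group cohomology `H³(G, M)`, via inhomogeneous cochains. -/
abbrev H3 := cocycles3 G M ⧸ ((coboundaries3 G M).addSubgroupOf (cocycles3 G M))

/-- The subgroup of 2-cocycles whose restriction to every cyclic subgroup is a
coboundary. -/
def shaCocycles : AddSubgroup (G → G → M) where
  carrier := {f | IsCocycle2 G M f ∧ ∀ (C : Subgroup G), IsCyclic C →
      IsCoboundary2 C M (fun a b : C => f a b)}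
  add_mem' := by
    rintro f g ⟨hf1, hf2⟩ ⟨hg1, hg2⟩
    refine ⟨(cocycles2 G M).add_mem hf1 hg1, fun C hC => ?_⟩
    obtain ⟨φ, hφ⟩ := hf2 C hC
    obtain ⟨ψ, hψ⟩ := hg2 C hC
    refine ⟨φ + ψ, fun a b => ?_⟩
    simp only [Pi.add_apply, smul_add, hφ a b, hψ a b]
    abel
  zero_mem' := by
    refine ⟨(cocycles2 G M).zero_mem, fun C hC => ⟨0, by intro a b; simp⟩⟩
  neg_mem' := by
    rintro f ⟨hf1, hf2⟩
    refine ⟨(cocycles2 G M).neg_mem hf1, fun C hC => ?_⟩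
    obtain ⟨φ, hφ⟩ := hf2 C hC
    refine ⟨-φ, fun a b => ?_⟩
    simp only [Pi.neg_apply, smul_neg, hφ a b]
    abel

/-- The Tate–Shafarevich group `Ш²(G, M)`: the kernel of
`H²(G,M) → ∏_C H²(C,M)` over all cyclic subgroups `C ⊆ G`, realized as
(locally trivial 2-cocycles) / (2-coboundaries). -/
abbrev Sha2 := shaCocycles G M ⧸ ((coboundaries2 G M).addSubgroupOf (shaCocycles G M))

end Cohomology

/-- `M` with the trivial action of `G`. -/
def TrivAct (G M : Type) : Type := M

instance (G M : Type) [AddCommGroup M] : AddCommGroup (TrivAct G M) :=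
  inferInstanceAs (AddCommGroup M)

instance (G M : Type) [Group G] [AddCommGroup M] : DistribMulAction G (TrivAct G M) where
  smul _ m := m
  one_smul _ := rfl
  mul_smul _ _ _ := rfl
  smul_zero _ := rfl
  smul_add _ _ _ := rfl

section JGamma

/-- The subgroup of `ℤ[Γ] = (Γ → ℤ)` generated by the norm element `∑_{s∈Γ} s`
(the constant function `1`). -/
def normSub (Γ : Type) : AddSubgroup (Γ → ℤ) :=
  AddSubgroup.zmultiples (fun _ => (1 : ℤ))

/-- The lattice `J_Γ = ℤ[Γ]/ℤ`, the cokernel of the norm map `ℤ → ℤ[Γ]`.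
Here `ℤ[Γ]` is modelled as functions `Γ → ℤ` with `Γ` acting by left translation;
the norm element is the constant function `1`. -/
abbrev JLat (Γ : Type) := (Γ → ℤ) ⧸ normSub Γ

variable {Γ : Type} [Group Γ]

/-- Left translation on `ℤ[Γ] = (Γ → ℤ)`. -/
def shiftHom (g : Γ) : (Γ → ℤ) →+ (Γ → ℤ) where
  toFun f := fun h => f (g⁻¹ * h)
  map_zero' := rfl
  map_add' _ _ := rfl

instance : DistribMulAction Γ (JLat Γ) where
  smul g := fun x => QuotientAddGroup.map _ _ (shiftHom g)
    (by rintro f ⟨n, rfl⟩; exact ⟨n, rfl⟩) x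
  one_smul := by
    intro x
    refine QuotientAddGroup.induction_on x fun f => ?_
    show QuotientAddGroup.map _ _ _ _ _ = _
    rw [QuotientAddGroup.map_mk]
    congr 1
    funext h
    simp [shiftHom]
  mul_smul := by
    intro g g' x
    refine QuotientAddGroup.induction_on x fun f => ?_
    show QuotientAddGroup.map _ _ _ _ _ =
      QuotientAddGroup.map _ _ _ _ (QuotientAddGroup.map _ _ _ _ _)
    rw [QuotientAddGroup.map_mk, QuotientAddGroup.map_mk, QuotientAddGroup.map_mk]
    congr 1
    funext h
    simp [shiftHom, mul_assoc]
  smul_zero := by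
    intro g
    exact map_zero (QuotientAddGroup.map _ _ (shiftHom g)
      (by rintro f ⟨n, rfl⟩; exact ⟨n, rfl⟩))
  smul_add := by
    intro g x y
    exact map_add (QuotientAddGroup.map _ _ (shiftHom g)
      (by rintro f ⟨n, rfl⟩; exact ⟨n, rfl⟩)) x y

end JGamma


/-- The additive subgroup of a product consisting of tuples vanishing away from `i`. -/
def zeroOff (m : ℕ) (V : Fin m → Type) [∀ i, AddCommGroup (V i)] (i : Fin m) :
    AddSubgroup (∀ k, V k) where
  carrier := {x | ∀ k, k ≠ i → x k = 0}
  add_mem' := by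
    intro a b ha hb k hk
    simp [Pi.add_apply, ha k hk, hb k hk]
  zero_mem' := fun _ _ => rfl
  neg_mem' := by
    intro a ha k hk
    simp [Pi.neg_apply, ha k hk]

/-- `L ∩ V_i`, for `L` a subgroup of `V = V₁ ⊕ ⋯ ⊕ V_m`. -/
def Lsect (m : ℕ) (V : Fin m → Type) [∀ i, AddCommGroup (V i)]
    (L : AddSubgroup (∀ k, V k)) (i : Fin m) : AddSubgroup (∀ k, V k) :=
  L ⊓ zeroOff m V i

/-- Action of `G` on a quotient by a `G`-invariant additive subgroup. -/
def quotAction {G M : Type} [Group G] [AddCommGroup M] [DistribMulAction G M]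
    (K : AddSubgroup M) (h : ∀ (g : G) (x : M), x ∈ K → g • x ∈ K) :
    DistribMulAction G (M ⧸ K) where
  smul g := QuotientAddGroup.map K K (DistribMulAction.toAddMonoidHom M g)
    (fun x hx => h g x hx)
  one_smul x := QuotientAddGroup.induction_on x fun m => by
    show (((1:G) • m : M) : M ⧸ K) = _
    simp
  mul_smul g g' x := QuotientAddGroup.induction_on x fun m => by
    show QuotientAddGroup.map _ _ _ _ _ =
      QuotientAddGroup.map _ _ _ _ (QuotientAddGroup.map _ _ _ _ _)
    show (((g * g') • m : M) : M ⧸ K) = ((g • (g' • m) : M) : M ⧸ K)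
    simp [mul_smul]
  smul_zero g := map_zero (QuotientAddGroup.map K K
    (DistribMulAction.toAddMonoidHom M g) (fun x hx => h g x hx))
  smul_add g x y := map_add (QuotientAddGroup.map K K
    (DistribMulAction.toAddMonoidHom M g) (fun x hx => h g x hx)) x y

/-- Let `W₁, …, W_m` be finite groups, `V_i` a finite-dimensional
`ℚ`-representation of `W_i`, `V = V₁ ⊕ ⋯ ⊕ V_m` with the product action of
`W = W₁ × ⋯ × W_m`, and let `L ⊆ V` be a `W`-invariant finitely generated free abelian
subgroup. If `L` is a quasi-permutation `W`-lattice, then for each `i` the lattice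
`L_i = L ∩ V_i` is a quasi-permutation `W_i`-lattice (with `W_i` acting through the
inclusion `W_i → W`). -/
theorem quasiPermutation_inter_component (m : ℕ) (W : Fin m → Type)
    [∀ i, Group (W i)] [∀ i, Finite (W i)]
    (V : Fin m → Type) [∀ i, AddCommGroup (V i)] [∀ i, Module ℚ (V i)]
    [∀ i, FiniteDimensional ℚ (V i)]
    [∀ i, DistribMulAction (W i) (V i)] [∀ i, SMulCommClass (W i) ℚ (V i)]
    (L : AddSubgroup (∀ k, V k))
    (hinv : ∀ (w : ∀ k, W k) (x : ∀ k, V k), x ∈ L → w • x ∈ L)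
    [Module.Free ℤ L] [Module.Finite ℤ L]
    (hqp : IsQuasiPermutation (Γ := ∀ k, W k)
      (@GammaMod.mk _ _ L _ (subAction L hinv)))
    (i : Fin m) :
    letI : DistribMulAction (W i) (∀ k, V k) :=
      DistribMulAction.compHom _ (MonoidHom.mulSingle W i)
    ∃ hi : ∀ (w : W i) (x : ∀ k, V k), x ∈ Lsect m V L i → w • x ∈ Lsect m V L i,
      IsQuasiPermutation (Γ := W i)
        (@GammaMod.mk _ _ (Lsect m V L i) _ (subAction _ hi)) := by
  classical
  letI instVW : DistribMulAction (W i) (∀ k, V k) :=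
    DistribMulAction.compHom _ (MonoidHom.mulSingle W i)
  letI actL : DistribMulAction (∀ k, W k) (↥L) := subAction L hinv
  -- torsion-freeness of each `V k`
  have vzero : ∀ (k : Fin m) (v : V k) (n : ℤ), n ≠ 0 → n • v = 0 → v = 0 := by
    intro k v n hn h
    have h2 : ((n : ℚ)) • v = 0 := by
      rw [Int.cast_smul_eq_zsmul]; exact h
    have h3 : ((n : ℚ)⁻¹ * (n : ℚ)) • v = 0 := by rw [mul_smul, h2, smul_zero]
    rwa [inv_mul_cancel₀ (Int.cast_ne_zero.mpr hn), one_smul] at h3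
  have hsing : ∀ (γ : W i) (k : Fin m), k ≠ i → (MonoidHom.mulSingle W i γ) k = 1 := by
    intro γ k hk
    rw [MonoidHom.mulSingle_apply]
    exact Pi.mulSingle_eq_of_ne hk γ
  have hi : ∀ (w : W i) (x : ∀ k, V k), x ∈ Lsect m V L i → w • x ∈ Lsect m V L i := by
    intro w x hx
    refine ⟨hinv _ x hx.1, ?_⟩
    intro k hk
    show ((MonoidHom.mulSingle W i w) • x) k = 0
    rw [Pi.smul_apply', hsing w k hk, one_smul]
    exact hx.2 k hk
  refine ⟨hi, ?_⟩
  obtain ⟨P, P', hP, hP', f, g, hf, hg, hinjf, hsurjg, hker⟩ := hqp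
  letI actP : DistribMulAction (W i) P.carrier :=
    DistribMulAction.compHom _ (MonoidHom.mulSingle W i)
  -- inclusion of L_i into L
  let incl : (↥(Lsect m V L i)) →+ (↥L) :=
    { toFun := fun z => ⟨z.1, z.2.1⟩
      map_zero' := rfl
      map_add' := fun _ _ => rfl }
  let F : (↥(Lsect m V L i)) →+ P.carrier := f.comp incl
  let K : AddSubgroup P.carrier := F.range
  -- Claim A : translates by `W i` move elements of `f(L)` by elements of `K`
  have claimA : ∀ (γ : W i) (y : (↥L)),
      (MonoidHom.mulSingle W i γ) • f y - f y ∈ K := by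
    intro γ y
    have h1 : (MonoidHom.mulSingle W i γ) • f y
        = f ((MonoidHom.mulSingle W i γ) • y) := (hf _ y).symm
    have h2 : (MonoidHom.mulSingle W i γ) • f y - f y
        = f ((MonoidHom.mulSingle W i γ) • y - y) := by
      rw [map_sub, h1]
    have hmem : ((((MonoidHom.mulSingle W i γ) • y - y : (↥L))) : ∀ k, V k)
        ∈ Lsect m V L i := by
      refine ⟨((MonoidHom.mulSingle W i γ) • y - y).2, ?_⟩
      intro k hk
      show ((MonoidHom.mulSingle W i γ) • (y : ∀ k, V k)) k - (y : ∀ k, V k) k = 0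
      rw [Pi.smul_apply', hsing γ k hk, one_smul, sub_self]
    refine AddMonoidHom.mem_range.mpr ⟨⟨_, hmem⟩, ?_⟩
    rw [h2]
    exact congrArg f (Subtype.ext rfl)
  have hK : ∀ (γ : W i) (x : P.carrier), x ∈ K → γ • x ∈ K := by
    intro γ x hx
    obtain ⟨z, rfl⟩ := AddMonoidHom.mem_range.mp hx
    show (MonoidHom.mulSingle W i γ) • (F z) ∈ K
    have : (MonoidHom.mulSingle W i γ) • (F z)
        = ((MonoidHom.mulSingle W i γ) • f (incl z) - f (incl z)) + F z := by
      show _ = ((MonoidHom.mulSingle W i γ) • F z - F z) + F z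
      abel
    rw [this]
    exact K.add_mem (claimA γ (incl z)) (AddMonoidHom.mem_range.mpr ⟨z, rfl⟩)
  letI actN : DistribMulAction (W i) (P.carrier ⧸ K) := quotAction K hK
  let q : P.carrier →+ (P.carrier ⧸ K) := QuotientAddGroup.mk' K
  have hqsmul : ∀ (γ : W i) (x : P.carrier),
      γ • (q x) = q ((MonoidHom.mulSingle W i γ) • x) := by
    intro γ x
    show QuotientAddGroup.map K K (DistribMulAction.toAddMonoidHom P.carrier γ)
      (fun a ha => hK γ a ha) ((x : P.carrier ⧸ K)) = _
    show (((MonoidHom.mulSingle W i γ) • x : P.carrier) : P.carrier ⧸ K) = _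
    rfl
  have hA : ∀ (γ : W i) (x : P.carrier), x ∈ Set.range f →
      q ((MonoidHom.mulSingle W i γ) • x) = q x := by
    rintro γ _ ⟨y, rfl⟩
    exact (QuotientAddGroup.eq_iff_sub_mem).mpr (claimA γ y)
  -- torsion-freeness lemma in the quotient
  have tf : ∀ (n : ℤ), n ≠ 0 → ∀ (y : (↥L)), n • (q (f y)) = 0 → q (f y) = 0 := by
    intro n hn y hy
    have h1 : q (f (n • y)) = 0 := by
      rw [map_zsmul f, map_zsmul q]
      exact hy
    have h2 : f (n • y) ∈ K := (QuotientAddGroup.eq_zero_iff _).mp h1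
    obtain ⟨z, hz⟩ := AddMonoidHom.mem_range.mp h2
    have h3 : incl z = n • y := hinjf hz
    have h4 : ∀ k, k ≠ i → (y : ∀ k, V k) k = 0 := by
      intro k hk
      have h5 : ((Pi.evalAddMonoidHom V k).comp (L.subtype)) (incl z)
          = ((Pi.evalAddMonoidHom V k).comp (L.subtype)) (n • y) := by rw [h3]
      rw [map_zsmul] at h5
      have h8 : (z : ∀ k, V k) k = n • (y : ∀ k, V k) k := h5
      rw [z.2.2 k hk] at h8
      exact vzero k _ n hn h8.symm
    have h9 : ((y : ∀ k, V k)) ∈ Lsect m V L i := ⟨y.2, h4⟩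
    have h10 : incl ⟨_, h9⟩ = y := Subtype.ext rfl
    refine (QuotientAddGroup.eq_zero_iff _).mpr ?_
    refine AddMonoidHom.mem_range.mpr ⟨⟨_, h9⟩, ?_⟩
    show f (incl ⟨_, h9⟩) = f y
    rw [h10]
  -- permutation basis of P'
  obtain ⟨J, instJ, bP', hbP'⟩ := hP'
  haveI := instJ
  obtain ⟨σ, hσ⟩ : ∃ σ : W i → J → J,
      ∀ (γ : W i) (j : J), (MonoidHom.mulSingle W i γ) • bP' j = bP' (σ γ j) :=
    ⟨fun γ j => Classical.choose (hbP' (MonoidHom.mulSingle W i γ) j),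
     fun γ j => Classical.choose_spec (hbP' (MonoidHom.mulSingle W i γ) j)⟩
  have binj : Function.Injective bP' := bP'.injective
  have σ_mul : ∀ (a b : W i) (j : J), σ (a * b) j = σ a (σ b j) := by
    intro a b j
    apply binj
    rw [← hσ, ← hσ, ← hσ, map_mul, mul_smul]
  have σ_one : ∀ j : J, σ 1 j = j := by
    intro j
    apply binj
    rw [← hσ, map_one, one_smul]
  have σ_inv : ∀ (a : W i) (j : J), σ a⁻¹ (σ a j) = j := by
    intro a j
    rw [← σ_mul, inv_mul_cancel, σ_one]
  let st : Setoid J := ⟨fun a b => ∃ γ : W i, σ γ a = b,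
    ⟨fun a => ⟨1, σ_one a⟩,
     fun {a b} h => by obtain ⟨γ, hγ⟩ := h; exact ⟨γ⁻¹, by rw [← hγ, σ_inv]⟩,
     fun {a b c} h1 h2 => by
       obtain ⟨γ, hγ⟩ := h1; obtain ⟨δ, hδ⟩ := h2
       exact ⟨δ * γ, by rw [σ_mul, hγ, hδ]⟩⟩⟩
  let r : J → J := fun j => Quotient.out (Quotient.mk st j)
  have hr_rel : ∀ j : J, ∃ γ : W i, σ γ (r j) = j := by
    intro j
    exact Quotient.exact (Quotient.out_eq (Quotient.mk st j))
  have hr_inv : ∀ (γ : W i) (j : J), r (σ γ j) = r j := by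
    intro γ j
    show Quotient.out (Quotient.mk st (σ γ j)) = Quotient.out (Quotient.mk st j)
    congr 1
    exact Quotient.sound ⟨γ⁻¹, σ_inv γ j⟩
  obtain ⟨w, hw⟩ : ∃ w : J → W i, ∀ j, σ (w j) (r j) = j :=
    ⟨fun j => Classical.choose (hr_rel j), fun j => Classical.choose_spec (hr_rel j)⟩
  obtain ⟨t, ht⟩ : ∃ t : J → P.carrier, ∀ j, g (t j) = bP' j :=
    ⟨fun j => Classical.choose (hsurjg (bP' j)),
     fun j => Classical.choose_spec (hsurjg (bP' j))⟩
  let u : J → P.carrier := fun j => (MonoidHom.mulSingle W i (w j)) • t (r j)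
  have hu : ∀ (γ : W i) (j : J),
      q ((MonoidHom.mulSingle W i γ) • u j) = q (u (σ γ j)) := by
    intro γ j
    have hrr : r (σ γ j) = r j := hr_inv γ j
    have hσh : σ ((w (σ γ j))⁻¹ * (γ * w j)) (r j) = r j := by
      rw [σ_mul, σ_mul, hw j]
      have h2 := hw (σ γ j)
      rw [hrr] at h2
      calc σ (w (σ γ j))⁻¹ (σ γ j)
          = σ (w (σ γ j))⁻¹ (σ (w (σ γ j)) (r j)) := by rw [h2]
        _ = r j := σ_inv _ _
    set h := (w (σ γ j))⁻¹ * (γ * w j) with hh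
    set d := (MonoidHom.mulSingle W i h) • t (r j) - t (r j) with hd
    have hd_range : d ∈ Set.range f := by
      refine ((hker _).mp ?_)
      rw [hd, map_sub, hg, ht, hσ, hσh, sub_self]
    have htele : ∀ n : ℕ,
        q ((MonoidHom.mulSingle W i (h ^ n)) • t (r j) - t (r j)) = n • q d := by
      intro n
      induction n with
      | zero => rw [pow_zero, map_one, one_smul, sub_self, map_zero, zero_nsmul]
      | succ n ih =>
        have e1 : (MonoidHom.mulSingle W i (h ^ (n+1))) • t (r j) - t (r j)
            = (MonoidHom.mulSingle W i (h ^ n)) • d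
              + ((MonoidHom.mulSingle W i (h ^ n)) • t (r j) - t (r j)) := by
          rw [hd, smul_sub, pow_succ, map_mul, mul_smul]
          abel
        rw [e1, map_add, hA (h ^ n) d hd_range, ih, succ_nsmul, add_comm]
    have hqd : q d = 0 := by
      obtain ⟨y, hy⟩ := hd_range
      have h0 : (orderOf h : ℤ) • q (f y) = 0 := by
        rw [natCast_zsmul, hy, ← htele (orderOf h), pow_orderOf_eq_one, map_one,
          one_smul, sub_self, map_zero]
      rw [← hy]
      exact tf (orderOf h) (Int.natCast_ne_zero.mpr (orderOf_pos h).ne') y h0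
    have e2 : (MonoidHom.mulSingle W i γ) • u j - u (σ γ j)
        = (MonoidHom.mulSingle W i (w (σ γ j))) • d := by
      rw [hd, smul_sub]
      show (MonoidHom.mulSingle W i γ) • ((MonoidHom.mulSingle W i (w j)) • t (r j))
          - (MonoidHom.mulSingle W i (w (σ γ j))) • t (r (σ γ j)) = _
      rw [hrr, ← mul_smul, ← map_mul, ← mul_smul, ← map_mul, hh, mul_inv_cancel_left]
    have e3 : q ((MonoidHom.mulSingle W i γ) • u j) - q (u (σ γ j)) = 0 := by
      rw [← map_sub, e2, hA (w (σ γ j)) d hd_range, hqd]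
    exact sub_eq_zero.mp e3
  -- the image of L in the quotient N = P/K
  let qf : (↥L) →ₗ[ℤ] (P.carrier ⧸ K) := (q.comp f).toIntLinearMap
  let Lbar : Submodule ℤ (P.carrier ⧸ K) := LinearMap.range qf
  haveI : Module.Finite ℤ Lbar := Module.Finite.range qf
  haveI : NoZeroSMulDivisors ℤ Lbar := by
    refine ⟨fun {n c} hnc => ?_⟩
    by_cases hn : n = 0
    · exact Or.inl hn
    · refine Or.inr ?_
      obtain ⟨y, hy⟩ := LinearMap.mem_range.mp c.2
      have hy2 : qf y = (c : P.carrier ⧸ K) := hy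
      have h0 : n • (q (f y)) = 0 := by
        show n • (qf y) = 0
        rw [hy2, ← Submodule.coe_smul, hnc, Submodule.coe_zero]
      have h1 : q (f y) = 0 := tf n hn y h0
      apply Subtype.ext
      rw [← hy2, Submodule.coe_zero]
      exact h1
  haveI : Module.Free ℤ Lbar := Module.free_of_finite_type_torsion_free'
  let bL := Module.Free.chooseBasis ℤ Lbar
  -- the induced map N → P'
  have hK_ker : K ≤ g.ker := by
    intro x hx
    obtain ⟨z, rfl⟩ := AddMonoidHom.mem_range.mp hx
    show g (f (incl z)) = 0
    exact (hker _).mpr ⟨incl z, rfl⟩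
  let glin : (P.carrier ⧸ K) →ₗ[ℤ] P'.carrier :=
    (QuotientAddGroup.lift K g hK_ker).toIntLinearMap
  have hglift : ∀ x : P.carrier, glin (q x) = g x :=
    fun x => QuotientAddGroup.lift_mk' K hK_ker x
  -- the splitting
  let s : P'.carrier →ₗ[ℤ] (P.carrier ⧸ K) := bP'.constr ℤ (fun j => q (u j))
  have hgs : ∀ p : P'.carrier, glin (s p) = p := by
    have hc : glin.comp s = LinearMap.id := by
      refine bP'.ext fun j => ?_
      rw [LinearMap.comp_apply, Module.Basis.constr_basis, LinearMap.id_apply]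
      show glin (q (u j)) = bP' j
      rw [hglift]
      show g ((MonoidHom.mulSingle W i (w j)) • t (r j)) = bP' j
      rw [hg, ht, hσ, hw]
    intro p
    exact LinearMap.congr_fun hc p
  have hLbar_ker : ∀ nn : P.carrier ⧸ K, glin nn = 0 → nn ∈ Lbar := by
    intro nn h0
    obtain ⟨x, rfl⟩ := QuotientAddGroup.mk'_surjective K nn
    have hx0 : g x = 0 := by rw [← hglift x]; exact h0
    obtain ⟨y, rfl⟩ := (hker x).mp hx0
    exact LinearMap.mem_range.mpr ⟨y, rfl⟩
  have hLbar0 : ∀ c : Lbar, glin (c : P.carrier ⧸ K) = 0 := by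
    rintro ⟨_, hc⟩
    obtain ⟨y, rfl⟩ := LinearMap.mem_range.mp hc
    show glin (q (f y)) = 0
    rw [hglift]
    exact (hker _).mpr ⟨y, rfl⟩
  let π : (P.carrier ⧸ K) →ₗ[ℤ] (P.carrier ⧸ K) := LinearMap.id - s.comp glin
  have mem1 : ∀ nn : P.carrier ⧸ K, π nn ∈ Lbar := by
    intro nn
    apply hLbar_ker
    show glin (nn - s (glin nn)) = 0
    rw [map_sub, hgs]
    exact sub_self _
  let φ : (P.carrier ⧸ K) →ₗ[ℤ] Lbar × P'.carrier :=
    LinearMap.prod (LinearMap.codRestrict Lbar π mem1) glin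
  let ψ : Lbar × P'.carrier →ₗ[ℤ] (P.carrier ⧸ K) :=
    (Lbar.subtype.comp (LinearMap.fst ℤ _ _)) + (s.comp (LinearMap.snd ℤ _ _))
  have h1 : φ.comp ψ = LinearMap.id := by
    apply LinearMap.ext
    rintro ⟨c, p⟩
    have hψ : ψ (c, p) = (c : P.carrier ⧸ K) + s p := rfl
    have hg1 : glin (ψ (c, p)) = p := by
      rw [hψ, map_add, hLbar0 c, hgs, zero_add]
    refine Prod.ext ?_ ?_
    · apply Subtype.ext
      show (ψ (c, p)) - s (glin (ψ (c, p))) = (c : P.carrier ⧸ K)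
      rw [hg1, hψ]
      exact add_sub_cancel_right _ _
    · exact hg1
  have h2 : ψ.comp φ = LinearMap.id := by
    apply LinearMap.ext
    intro nn
    show (nn - s (glin nn)) + s (glin nn) = nn
    exact sub_add_cancel nn _
  let iso : (P.carrier ⧸ K) ≃ₗ[ℤ] Lbar × P'.carrier := LinearEquiv.ofLinear φ ψ h1 h2
  let BN := (bL.prod bP').map iso.symm
  have hBNl : ∀ kk, BN (Sum.inl kk) = ((bL kk : Lbar) : P.carrier ⧸ K) := by
    intro kk
    rw [Module.Basis.map_apply, LinearEquiv.ofLinear_symm_apply]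
    have e1 : ((bL.prod bP') (Sum.inl kk)) = (bL kk, 0) :=
      Prod.ext (Module.Basis.prod_apply_inl_fst _ _ _) (Module.Basis.prod_apply_inl_snd _ _ _)
    rw [e1]
    show ((bL kk : Lbar) : P.carrier ⧸ K) + s 0 = _
    rw [map_zero, add_zero]
  have hBNr : ∀ j, BN (Sum.inr j) = q (u j) := by
    intro j
    rw [Module.Basis.map_apply, LinearEquiv.ofLinear_symm_apply]
    have e1 : ((bL.prod bP') (Sum.inr j)) = (0, bP' j) :=
      Prod.ext (Module.Basis.prod_apply_inr_fst _ _ _) (Module.Basis.prod_apply_inr_snd _ _ _)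
    rw [e1]
    show ((0 : Lbar) : P.carrier ⧸ K) + s (bP' j) = _
    rw [Submodule.coe_zero, zero_add]
    exact Module.Basis.constr_basis _ _ _ _
  -- final assembly
  obtain ⟨κ, instκ, bP, hbP⟩ := hP
  letI actLi : DistribMulAction (W i) (↥(Lsect m V L i)) := subAction _ hi
  refine ⟨@GammaMod.mk (W i) _ P.carrier _ actP,
          @GammaMod.mk (W i) _ (P.carrier ⧸ K) _ actN, ?_, ?_, F, q, ?_, ?_, ?_, ?_, ?_⟩
  · -- P is a permutation W i lattice
    exact ⟨κ, instκ, bP, fun γ k => hbP (MonoidHom.mulSingle W i γ) k⟩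
  · -- N is a permutation W i lattice
    haveI := instJ
    refine ⟨(Module.Free.ChooseBasisIndex ℤ Lbar) ⊕ J, inferInstance, BN, ?_⟩
    intro γ idx
    cases idx with
    | inl kk =>
      refine ⟨Sum.inl kk, ?_⟩
      rw [hBNl kk]
      obtain ⟨y, hy⟩ := LinearMap.mem_range.mp (bL kk).2
      rw [← hy]
      exact (hqsmul γ (f y)).trans (hA γ (f y) ⟨y, rfl⟩)
    | inr j =>
      refine ⟨Sum.inr (σ γ j), ?_⟩
      rw [hBNr j, hBNr (σ γ j)]
      exact (hqsmul γ (u j)).trans (hu γ j)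
  · -- equivariance of F
    intro γ z
    show f (incl (γ • z)) = (MonoidHom.mulSingle W i γ) • (f (incl z))
    have h3 : incl (γ • z) = (MonoidHom.mulSingle W i γ) • (incl z) := Subtype.ext rfl
    rw [h3]
    exact hf (MonoidHom.mulSingle W i γ) (incl z)
  · -- equivariance of q
    intro γ x
    exact (hqsmul γ x).symm
  · -- injectivity
    intro a b hab
    have hab' : f (incl a) = f (incl b) := hab
    have := hinjf hab'
    exact Subtype.ext (congrArg (fun v : ↥L => v.1) this)
  · exact QuotientAddGroup.mk'_surjective K
  · -- kernel
    intro y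
    constructor
    · intro h0
      obtain ⟨z, hz⟩ := AddMonoidHom.mem_range.mp ((QuotientAddGroup.eq_zero_iff y).mp h0)
      exact ⟨z, hz⟩
    · rintro ⟨z, rfl⟩
      exact (QuotientAddGroup.eq_zero_iff _).mpr (AddMonoidHom.mem_range.mpr ⟨z, rfl⟩)
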